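/- Let N be a positive integer and a an integer with 0 ≤ a ≤ (N−1)/2. Then the space C_a contains a nonzero function if and only if 4a + 2 > N (equivalently, a ≥ (N−1)/4). -/

import Mathlib

open Complex

/-- The (non-normalized) discrete Fourier transform on `ZMod N`:
`(dft N f) k = ∑_{j=0}^{N-1} exp(-2πi j k / N) f(j)`. -/
noncomputable def dft (N : ℕ) (f : ZMod N → ℂ) : ZMod N → ℂ := fun k =>
  ∑ j ∈ Finset.range N,
    Complex.exp (-(2 * Real.pi * Complex.I * (j : ℂ) * (k.val : ℂ)) / (N : ℂ)) * f (j : ZMod N)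

/-- The discrete interval `[-a, a]`, viewed as a subset of `ZMod N`. -/
def dInterval (N : ℕ) (a : ℤ) : Set (ZMod N) := {x | ∃ j : ℤ, |j| ≤ a ∧ (j : ZMod N) = x}

/-- The discrete Fourier transform as a linear map. -/
noncomputable def dftL (N : ℕ) : (ZMod N → ℂ) →ₗ[ℂ] (ZMod N → ℂ) where
  toFun f := dft N f
  map_add' f g := by
    funext k
    simp only [dft, Pi.add_apply, mul_add]
    rw [Finset.sum_add_distrib]
  map_smul' c f := by
    funext k
    simp only [dft, Pi.smul_apply, smul_eq_mul, RingHom.id_apply]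
    rw [Finset.mul_sum]
    exact Finset.sum_congr rfl fun j _ => by ring

/-- The subspace `L²(S)` of functions on `ZMod N` vanishing outside `S`. -/
noncomputable def supportedIn (N : ℕ) (S : Set (ZMod N)) : Submodule ℂ (ZMod N → ℂ) where
  carrier := {f | ∀ x ∉ S, f x = 0}
  add_mem' := by
    intro f g hf hg x hx
    simp [hf x hx, hg x hx]
  zero_mem' := by
    intro x _
    rfl
  smul_mem' := by
    intro c f hf x hx
    simp [hf x hx]

/-- The space `C_a` of functions supported in `[-a,a]` whose Fourier transform is
also supported in `[-a,a]`. -/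
noncomputable def Ca (N : ℕ) (a : ℤ) : Submodule ℂ (ZMod N → ℂ) :=
  supportedIn N (dInterval N a) ⊓ Submodule.comap (dftL N) (supportedIn N (dInterval N a))


section Aux
open Polynomial

noncomputable def zetaN (N : ℕ) : ℂ := Complex.exp (-(2 * Real.pi * Complex.I) / N)

lemma zetaN_prim (N : ℕ) (hN : 0 < N) : IsPrimitiveRoot (zetaN N) N := by
  have h := Complex.isPrimitiveRoot_exp N hN.ne'
  have : zetaN N = (Complex.exp (2 * Real.pi * Complex.I / N))⁻¹ := by
    rw [zetaN, neg_div, Complex.exp_neg]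
  rw [this]
  exact h.inv

lemma zetaN_zpow (N : ℕ) (c : ℤ) :
    zetaN N ^ c = Complex.exp (c * (-(2 * Real.pi * Complex.I) / N)) := by
  rw [zetaN, Complex.exp_int_mul]

lemma zetaN_zpow_congr (N : ℕ) (hN : 0 < N) {c d : ℤ} (h : (N : ℤ) ∣ c - d) :
    zetaN N ^ c = zetaN N ^ d := by
  obtain ⟨t, ht⟩ := h
  have hc : c = d + N * t := by linarith
  have hz : zetaN N ^ (N : ℤ) = 1 := by
    rw [zpow_natCast]
    exact (zetaN_prim N hN).pow_eq_one
  have hne : zetaN N ≠ 0 := Complex.exp_ne_zero _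
  rw [hc, zpow_add₀ hne, zpow_mul, hz, one_zpow, mul_one]

lemma mem_dInterval_iff {N : ℕ} {a : ℤ} {x : ZMod N} :
    x ∈ dInterval N a ↔ ∃ m ∈ Finset.Icc (-a) a, (m : ZMod N) = x := by
  simp [dInterval, abs_le, Finset.mem_Icc]

lemma castInjOn (N : ℕ) (a : ℤ) (h1 : 2 * a + 1 ≤ (N : ℤ)) :
    Set.InjOn (fun m : ℤ => (m : ZMod N)) (Finset.Icc (-a) a) := by
  intro m1 hm1 m2 hm2 h
  simp only [Finset.coe_Icc, Set.mem_Icc] at hm1 hm2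
  have hd : (N : ℤ) ∣ m1 - m2 := by
    have hmod := (ZMod.intCast_eq_intCast_iff_dvd_sub m1 m2 N).mp h
    exact (dvd_sub_comm).mp hmod
  by_contra hne
  have hpos : 0 < |m1 - m2| := by
    rw [abs_pos]; omega
  have hle : (N : ℤ) ≤ |m1 - m2| := Int.le_of_dvd hpos ((dvd_abs _ _).mpr hd)
  have : |m1 - m2| ≤ 2 * a := abs_le.mpr ⟨by omega, by omega⟩
  omega

lemma dft_supported (N : ℕ) (hN : 0 < N) (a : ℤ) (h1 : 2 * a + 1 ≤ (N : ℤ))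
    (f : ZMod N → ℂ) (hf : ∀ x ∉ dInterval N a, f x = 0) (k : ZMod N) :
    dft N f k = ∑ m ∈ Finset.Icc (-a) a, zetaN N ^ (m * (k.val : ℤ)) * f (m : ZMod N) := by
  haveI : NeZero N := ⟨hN.ne'⟩
  have stepA : dft N f k
      = ∑ j ∈ Finset.range N, zetaN N ^ (((j : ℤ)) * (k.val : ℤ)) * f (j : ZMod N) := by
    refine Finset.sum_congr rfl fun j hj => ?_
    congr 1
    rw [zetaN_zpow]
    congr 1
    push_cast
    ring
  rw [stepA]
  have hinj : ∀ m1 ∈ Finset.Icc (-a) a, ∀ m2 ∈ Finset.Icc (-a) a,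
      ((m1 : ZMod N)).val = ((m2 : ZMod N)).val → m1 = m2 := by
    intro m1 hm1 m2 hm2 h
    refine castInjOn N a h1 (by simpa using hm1) (by simpa using hm2) ?_
    show (m1 : ZMod N) = (m2 : ZMod N)
    have : (((m1 : ZMod N)).val : ZMod N) = (((m2 : ZMod N)).val : ZMod N) := by rw [h]
    simpa [ZMod.natCast_val, ZMod.cast_id] using this
  set G : ℕ → ℂ := fun j => zetaN N ^ (((j : ℤ)) * (k.val : ℤ)) * f (j : ZMod N) with hG
  have key : ∀ m ∈ Finset.Icc (-a) a,
      G ((m : ZMod N)).val = zetaN N ^ (m * (k.val : ℤ)) * f (m : ZMod N) := by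
    intro m hm
    have hval : ((((m : ZMod N)).val : ℕ) : ZMod N) = (m : ZMod N) := by
      simp [ZMod.natCast_val, ZMod.cast_id]
    have hvm : ((((m : ZMod N)).val : ℕ) : ℤ) = m % (N : ℤ) := ZMod.val_intCast m
    have hdvd : (N : ℤ) ∣ ((((m : ZMod N)).val : ℕ) : ℤ) * (k.val : ℤ) - m * (k.val : ℤ) := by
      rw [hvm]
      have : m % (N : ℤ) - m = -((N : ℤ) * (m / N)) := by
        rw [Int.emod_def]; ring
      refine ⟨-((m / N) * (k.val : ℤ)), ?_⟩
      rw [← sub_mul, this]; ring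
    rw [hG]
    simp only []
    rw [hval, zetaN_zpow_congr N hN hdvd]
  calc ∑ j ∈ Finset.range N, G j
      = ∑ j ∈ (Finset.Icc (-a) a).image (fun m : ℤ => ((m : ZMod N)).val), G j := by
        refine (Finset.sum_subset ?_ ?_).symm
        · intro j hj
          simp only [Finset.mem_image] at hj
          obtain ⟨m, hm, rfl⟩ := hj
          simp only [Finset.mem_range]
          exact ZMod.val_lt _
        · intro j hj hj'
          have hnot : (j : ZMod N) ∉ dInterval N a := by
            intro hmem
            obtain ⟨m, hm, hmx⟩ := mem_dInterval_iff.mp hmem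
            apply hj'
            simp only [Finset.mem_image]
            refine ⟨m, hm, ?_⟩
            rw [hmx, ZMod.val_natCast_of_lt (Finset.mem_range.mp hj)]
          simp [hG, hf _ hnot]
    _ = ∑ m ∈ Finset.Icc (-a) a, G ((m : ZMod N)).val := Finset.sum_image hinj
    _ = ∑ m ∈ Finset.Icc (-a) a, zetaN N ^ (m * (k.val : ℤ)) * f (m : ZMod N) :=
        Finset.sum_congr rfl key

lemma forward_dir (N : ℕ) (hN : 0 < N) (a : ℤ) (h0 : 0 ≤ a) (h1 : 2 * a + 1 ≤ (N : ℤ))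
    (f : ZMod N → ℂ) (hsupp : ∀ x ∉ dInterval N a, f x = 0)
    (hhat : ∀ x ∉ dInterval N a, dft N f x = 0) (hfne : f ≠ 0) : (N : ℤ) < 4 * a + 2 := by
  by_contra hcon
  push_neg at hcon  -- hcon : 4 * a + 2 ≤ N
  haveI : NeZero N := ⟨hN.ne'⟩
  set b : ℕ := a.toNat with hb
  have hba : (b : ℤ) = a := Int.toNat_of_nonneg h0
  -- the polynomial
  set P : Polynomial ℂ :=
    ∑ j ∈ Finset.range (2 * b + 1), Polynomial.C (f (((j : ℤ) - a : ℤ) : ZMod N)) * X ^ j with hP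
  have hPdeg : P.natDegree ≤ 2 * b := by
    refine Polynomial.natDegree_sum_le_of_forall_le _ _ fun j hj => ?_
    exact (Polynomial.natDegree_C_mul_X_pow_le _ _).trans (by
      have := Finset.mem_range.mp hj; omega)
  -- evaluation formula
  have heval : ∀ k : ZMod N,
      P.eval (zetaN N ^ ((k.val : ℤ))) = zetaN N ^ (a * (k.val : ℤ)) * dft N f k := by
    intro k
    rw [dft_supported N hN a h1 f hsupp k, Finset.mul_sum]
    have hPe : P.eval (zetaN N ^ ((k.val : ℤ)))
        = ∑ j ∈ Finset.range (2 * b + 1),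
            zetaN N ^ (((j : ℤ) - a + a) * (k.val : ℤ)) * f (((j : ℤ) - a : ℤ) : ZMod N) := by
      rw [hP]
      rw [Polynomial.eval_finset_sum]
      refine Finset.sum_congr rfl fun j hj => ?_
      rw [Polynomial.eval_mul, Polynomial.eval_C, Polynomial.eval_pow, Polynomial.eval_X]
      rw [← zpow_natCast (zetaN N ^ ((k.val : ℤ))) j, ← zpow_mul]
      have : (k.val : ℤ) * (j : ℤ) = ((j : ℤ) - a + a) * (k.val : ℤ) := by ring
      rw [this, mul_comm]
    rw [hPe]
    refine Finset.sum_nbij' (fun j : ℕ => (j : ℤ) - a) (fun m : ℤ => (m + a).toNat)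
      ?_ ?_ ?_ ?_ ?_
    · intro j hj
      simp only [Finset.mem_range] at hj
      simp only [Finset.mem_Icc]
      omega
    · intro m hm
      simp only [Finset.mem_Icc] at hm
      simp only [Finset.mem_range]
      omega
    · intro j hj; simp only [Finset.mem_range] at hj
      show (((j : ℤ) - a) + a).toNat = j; omega
    · intro m hm; simp only [Finset.mem_Icc] at hm
      show (((m + a).toNat : ℤ) - a) = m; omega
    · intro j hj
      have hz : zetaN N ≠ 0 := Complex.exp_ne_zero _
      rw [add_mul, zpow_add₀ hz]
      ring_nf
  -- roots
  have hroot : ∀ n ∈ Finset.Icc (b + 1) (N - 1 - b), P.eval (zetaN N ^ n) = 0 := by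
    intro n hn
    simp only [Finset.mem_Icc] at hn
    have hnN : n < N := by omega
    set k : ZMod N := (n : ZMod N) with hk
    have hkv : k.val = n := ZMod.val_natCast_of_lt hnN
    have hknot : k ∉ dInterval N a := by
      intro hmem
      obtain ⟨m, hm, hmx⟩ := mem_dInterval_iff.mp hmem
      simp only [Finset.mem_Icc] at hm
      have hd : (N : ℤ) ∣ (n : ℤ) - m :=
        (ZMod.intCast_eq_intCast_iff_dvd_sub m (n : ℤ) N).mp (by rw [hmx]; push_cast; rfl)
      have h2 : 0 < (n : ℤ) - m := by omega
      have := Int.le_of_dvd h2 hd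
      omega
    have := heval k
    rw [hhat k hknot, mul_zero] at this
    rw [← zpow_natCast (zetaN N) n, ← hkv]
    exact this
  have hPzero : P = 0 := by
    refine Polynomial.eq_zero_of_natDegree_lt_card_of_eval_eq_zero' P
      ((Finset.Icc (b + 1) (N - 1 - b)).image (fun n => zetaN N ^ n)) ?_ ?_
    · intro z hz
      simp only [Finset.mem_image] at hz
      obtain ⟨n, hn, rfl⟩ := hz
      exact hroot n hn
    · rw [Finset.card_image_of_injOn, Nat.card_Icc]
      · omega
      · intro i hi j hj hij
        simp only [Finset.coe_Icc, Set.mem_Icc] at hi hj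
        exact (zetaN_prim N hN).pow_inj (by omega) (by omega) hij
  -- conclude f = 0
  apply hfne
  funext x
  by_cases hx : x ∈ dInterval N a
  · obtain ⟨m, hm, rfl⟩ := mem_dInterval_iff.mp hx
    simp only [Finset.mem_Icc] at hm
    have hj : (m + a).toNat < 2 * b + 1 := by omega
    have hc : P.coeff (m + a).toNat = f ((((m + a).toNat : ℤ) - a : ℤ) : ZMod N) := by
      rw [hP, Polynomial.finset_sum_coeff]
      rw [Finset.sum_eq_single (m + a).toNat]
      · simp
      · intro i hi hne
        simp [Polynomial.coeff_C_mul, Polynomial.coeff_X_pow, (Ne.symm hne)]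
      · intro h; exact absurd (Finset.mem_range.mpr hj) h
    have hm' : (((m + a).toNat : ℤ) - a : ℤ) = m := by omega
    rw [hm'] at hc
    rw [← hc, hPzero]
    simp
  · exact hsupp x hx

lemma mem_supportedIn {N : ℕ} {S : Set (ZMod N)} {f : ZMod N → ℂ} :
    f ∈ supportedIn N S ↔ ∀ x ∉ S, f x = 0 := Iff.rfl

open scoped Classical in
/-- restriction to S as a linear equivalence -/
noncomputable def restrictEquiv (N : ℕ) (S : Set (ZMod N)) :
    (supportedIn N S) ≃ₗ[ℂ] (S → ℂ) where
  toFun f := fun x => f.1 x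
  map_add' f g := rfl
  map_smul' c f := rfl
  invFun g := ⟨fun x => if h : x ∈ S then g ⟨x, h⟩ else 0, fun x hx => by simp [hx]⟩
  left_inv f := by
    ext x
    by_cases h : x ∈ S
    · simp [h]
    · simp [h, (f.2 x h).symm]
  right_inv g := by ext x; simp [x.2]

lemma card_dInterval (N : ℕ) (hN : 0 < N) (a : ℤ) (h0 : 0 ≤ a) (h1 : 2 * a + 1 ≤ (N : ℤ)) :
    Nat.card (dInterval N a) = (2 * a + 1).toNat := by
  have : dInterval N a = ((Finset.Icc (-a) a).image (fun m : ℤ => (m : ZMod N)) : Finset (ZMod N)) := by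
    ext x
    simp [mem_dInterval_iff]
  rw [this, Nat.card_coe_set_eq, Set.ncard_coe_finset,
    Finset.card_image_of_injOn (castInjOn N a h1), Int.card_Icc]
  omega

lemma backward_dir (N : ℕ) (hN : 0 < N) (a : ℤ) (h0 : 0 ≤ a) (h1 : 2 * a + 1 ≤ (N : ℤ))
    (h2 : (N : ℤ) < 4 * a + 2) : ∃ f ∈ Ca N a, f ≠ 0 := by
  classical
  haveI : NeZero N := ⟨hN.ne'⟩
  set S : Set (ZMod N) := dInterval N a with hS
  -- the restriction-of-dft map
  let T : (supportedIn N S) →ₗ[ℂ] ((Sᶜ : Set (ZMod N)) → ℂ) :=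
    { toFun := fun f => fun x => dftL N f.1 x.1
      map_add' := fun f g => by
        funext x
        simp only [Submodule.coe_add, map_add, Pi.add_apply]
      map_smul' := fun c f => by
        funext x
        simp only [Submodule.coe_smul, map_smul, Pi.smul_apply, RingHom.id_apply] }
  have hcardS : Nat.card S = (2 * a + 1).toNat := card_dInterval N hN a h0 h1
  have hfr1 : Module.finrank ℂ (supportedIn N S) = (2 * a + 1).toNat := by
    rw [(restrictEquiv N S).finrank_eq, Module.finrank_pi]
    rw [← Nat.card_eq_fintype_card]
    exact hcardS
  have hfr2 : Module.finrank ℂ ((Sᶜ : Set (ZMod N)) → ℂ) = N - (2 * a + 1).toNat := by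
    rw [Module.finrank_pi, ← Nat.card_eq_fintype_card, Nat.card_coe_set_eq]
    have hcompl := Set.ncard_add_ncard_compl S (Set.toFinite S) (Set.toFinite Sᶜ)
    rw [Nat.card_zmod] at hcompl
    rw [Nat.card_coe_set_eq] at hcardS
    omega
  have hnotinj : ¬ Function.Injective T := by
    intro hinj
    have hle := LinearMap.finrank_le_finrank_of_injective hinj
    rw [hfr1, hfr2] at hle
    omega
  rw [Function.not_injective_iff] at hnotinj
  obtain ⟨x, y, hxy, hne⟩ := hnotinj
  refine ⟨(x - y : supportedIn N S), ?_, ?_⟩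
  · refine Submodule.mem_inf.mpr ⟨(x - y).2, Submodule.mem_comap.mpr (mem_supportedIn.mpr ?_)⟩
    intro z hz
    have hT0 : T (x - y) = 0 := by rw [map_sub, hxy, sub_self]
    have h3 := congrFun hT0 ⟨z, hz⟩
    exact h3
  · intro h
    apply hne
    have : (x - y : supportedIn N S) = 0 := Subtype.ext h
    exact sub_eq_zero.mp this

end Aux

theorem statement0 (N : ℕ) (hN : 0 < N) (a : ℤ) (h0 : 0 ≤ a) (h1 : 2 * a + 1 ≤ (N : ℤ)) :
    (∃ f ∈ Ca N a, f ≠ 0) ↔ (N : ℤ) < 4 * a + 2 := by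
  constructor
  · rintro ⟨f, hf, hfne⟩
    obtain ⟨hf1, hf2⟩ := Submodule.mem_inf.mp hf
    exact forward_dir N hN a h0 h1 f hf1 (fun x hx => Submodule.mem_comap.mp hf2 x hx) hfne
  · intro h2
    exact backward_dir N hN a h0 h1 h2
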